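/- Let n ≥ 1 and let m_1,...,m_n be nonnegative integers with m = m_1 + ... + m_n. Then there exist a BST S on [n] and a sequence σ of length m over [n], in which each i ∈ [n] occurs exactly m_i times, such that Λ'(S,σ) ≥ (1/4)·m·H(m_1,...,m_n). -/

import Mathlib

/-- A rooted tree (or the empty tree) on a subset `supp` of the vertex type `V`,
represented by parent pointers. -/
structure RTree (V : Type) where
  supp : Finset V
  parent : V → Option V
  parent_eq_none : ∀ v ∉ supp, parent v = none
  mem_of_parent : ∀ {v w : V}, parent v = some w → v ∈ supp ∧ w ∈ supp
  root_unique : ∀ v ∈ supp, ∀ w ∈ supp, parent v = none → parent w = none → v = w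
  reaches_root : ∀ v ∈ supp, ∃ r ∈ supp, parent r = none ∧
    Relation.ReflTransGen (fun a b => parent a = some b) v r

namespace RTree

variable {V : Type}

/-- `T.Anc a v` : `a` is an ancestor of `v` in `T` (possibly `a = v`). -/
def Anc (T : RTree V) (a v : V) : Prop :=
  Relation.ReflTransGen (fun x y => T.parent x = some y) v a

/-- `a` is a strict ancestor of `v`. -/
def StrictAnc (T : RTree V) (a v : V) : Prop := a ≠ v ∧ T.Anc a v

/-- The set of vertices of the subtree rooted at `a` (the descendants of `a`). -/
def descSet (T : RTree V) (a : V) : Set V := {v | T.Anc a v}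

/-- The depth of a node: the number of nodes on the path from the root to it
(the root has depth 1). -/
noncomputable def depth (T : RTree V) (v : V) : ℕ := Set.ncard {a | T.Anc a v}

def IsRoot (T : RTree V) (r : V) : Prop := r ∈ T.supp ∧ T.parent r = none

end RTree

/-- The restriction of a graph to a set of vertices (keeping the ambient vertex type). -/
def restrictG {V : Type} (G : SimpleGraph V) (U : Set V) : SimpleGraph V where
  Adj a b := G.Adj a b ∧ a ∈ U ∧ b ∈ U
  symm := ⟨fun a b ⟨h, ha, hb⟩ => ⟨h.symm, hb, ha⟩⟩
  loopless := ⟨fun a ⟨h, _, _⟩ => G.ne_of_adj h rfl⟩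

/-- `T` is a search tree on the induced subgraph `G[U]`: its nodes are the vertices of `U`,
the subtree of every node induces a connected subgraph, and every edge of `G[U]` joins
two comparable nodes of `T`. -/
def IsSTGOn {V : Type} (G : SimpleGraph V) (U : Finset V) (T : RTree V) : Prop :=
  T.supp = U ∧
  (∀ v ∈ U, ((restrictG G ↑U).induce (T.descSet v)).Connected) ∧
  (∀ u v : V, u ∈ U → v ∈ U → G.Adj u v → T.Anc u v ∨ T.Anc v u)

/-- `T` is a search tree on the graph `G`. -/
def IsSTG {V : Type} [Fintype V] (G : SimpleGraph V) (T : RTree V) : Prop :=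
  IsSTGOn G Finset.univ T

/-- `T'` is obtained from `T` by rotating the edge `(p, c)` of `T`, where `p` is
the parent of `c`: `c` replaces `p` (becoming a child of `p`'s former parent, or the
root if `p` was the root), `p` becomes a child of `c`, `p` keeps its other children,
and each child `x` of `c` whose subtree contains a vertex of `G` adjacent to `p`
becomes a child of `p` (the other children of `c` stay children of `c`). -/
def IsRotationAt {V : Type} (G : SimpleGraph V) (T T' : RTree V) (p c : V) : Prop :=
  T.parent c = some p ∧
  T'.supp = T.supp ∧
  T'.parent c = T.parent p ∧
  T'.parent p = some c ∧
  (∀ x : V, x ≠ p → T.parent x = some c →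
    ((∃ u ∈ T.descSet x, G.Adj u p) → T'.parent x = some p) ∧
    (¬(∃ u ∈ T.descSet x, G.Adj u p) → T'.parent x = some c)) ∧
  (∀ x : V, x ≠ c → x ≠ p → T.parent x ≠ some c → T'.parent x = T.parent x)

/-- `T'` is obtained from `T` by a single rotation. -/
def IsRotation {V : Type} (G : SimpleGraph V) (T T' : RTree V) : Prop :=
  ∃ p c, IsRotationAt G T T' p c

/-- `T2` can be obtained from `T1` by exactly `k` rotations. -/
def ReachesIn {V : Type} (G : SimpleGraph V) : ℕ → RTree V → RTree V → Prop
  | 0, T1, T2 => T1 = T2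
  | k+1, T1, T2 => ∃ T', IsRotation G T1 T' ∧ ReachesIn G k T' T2

/-- Vertex type of the caterpillar `C(m_1, …, m_n)`: spine vertices `inl i` and
leg vertices `inr ⟨i, j⟩`. -/
abbrev CatV (n : ℕ) (m : Fin n → ℕ) : Type := Fin n ⊕ (Σ i : Fin n, Fin (m i))

/-- The caterpillar tree `C(m_1, …, m_n)`: the spine `s_1 - s_2 - ⋯ - s_n` is a path,
and leg `ℓ_{i,j}` is adjacent to `s_i`. -/
def caterpillar (n : ℕ) (m : Fin n → ℕ) : SimpleGraph (CatV n m) where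
  Adj x y :=
    match x, y with
    | Sum.inl i, Sum.inl j => i.val + 1 = j.val ∨ j.val + 1 = i.val
    | Sum.inl i, Sum.inr l => l.1 = i
    | Sum.inr l, Sum.inl i => l.1 = i
    | Sum.inr _, Sum.inr _ => False
  symm := ⟨by rintro (i | l) (j | l') h <;> simp_all <;> tauto⟩
  loopless := ⟨by rintro (i | l) h <;> simp_all⟩

/-- The (base 2) Shannon entropy `H(m_1, …, m_n) = ∑_{i : m_i > 0} (m_i/m) log (m/m_i)`. -/
noncomputable def shannonH {n : ℕ} (m : Fin n → ℕ) : ℝ :=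
  ∑ i, if 0 < m i then
    ((m i : ℝ) / (∑ j, (m j : ℝ))) * Real.logb 2 ((∑ j, (m j : ℝ)) / (m i : ℝ))
  else 0

/-- The parent function of the search tree `A(S, π)` on the caterpillar: the legs form a
path at the top of the tree, ordered bottom-to-top according to `π`, and the spine nodes
hang below, arranged according to the BST `S`. -/
def AParent {n : ℕ} {m : Fin n → ℕ} (S : RTree (Fin n))
    (π : Fin (∑ i, m i) ≃ (Σ i : Fin n, Fin (m i))) :
    CatV n m → Option (CatV n m) :=
  fun x => match x with
  | Sum.inl i =>
      match S.parent i with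
      | some j => some (Sum.inl j)
      | none => if h : 0 < ∑ i, m i then some (Sum.inr (π ⟨0, h⟩)) else none
  | Sum.inr l =>
      if h : (π.symm l).val + 1 < ∑ i, m i then
        some (Sum.inr (π ⟨(π.symm l).val + 1, h⟩))
      else none

/-- `T = A(S, π)`. -/
def IsA {n : ℕ} {m : Fin n → ℕ} (S : RTree (Fin n))
    (π : Fin (∑ i, m i) ≃ (Σ i : Fin n, Fin (m i))) (T : RTree (CatV n m)) : Prop :=
  T.supp = Finset.univ ∧ T.parent = AParent S π

/-- The parent function of the search tree `B(S)` on the caterpillar: every leg `ℓ_{i,j}`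
is a (childless) child of `s_i`, and the spine nodes are arranged according to `S`. -/
def BParent {n : ℕ} {m : Fin n → ℕ} (S : RTree (Fin n)) :
    CatV n m → Option (CatV n m) :=
  fun x => match x with
  | Sum.inl i => (S.parent i).map Sum.inl
  | Sum.inr l => some (Sum.inl l.1)

/-- `T = B(S)`. -/
def IsB {n : ℕ} {m : Fin n → ℕ} (S : RTree (Fin n)) (T : RTree (CatV n m)) : Prop :=
  T.supp = Finset.univ ∧ T.parent = BParent S

/-- `σ(π)`: the sequence of spine indices obtained from the leg ordering `π` by replacing
each leg `ℓ_{i,j}` with `i`. -/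
def sigmaOf {n : ℕ} {m : Fin n → ℕ}
    (π : Fin (∑ i, m i) ≃ (Σ i : Fin n, Fin (m i))) : List (Fin n) :=
  List.ofFn (fun j => (π j).1)

/-- Every leg node of `T` is bound, i.e. no leg node has a child. -/
def noFreeLegs {n : ℕ} {m : Fin n → ℕ} (T : RTree (CatV n m)) : Prop :=
  ∀ (x : CatV n m) (l : Σ i : Fin n, Fin (m i)), T.parent x ≠ some (Sum.inr l)

open Classical in
/-- The number of adjacent pairs in a list satisfying `P`. -/
noncomputable def pairAlt {α : Type} (P : α → α → Prop) : List α → ℕ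
  | [] => 0
  | [_] => 0
  | a :: b :: t => (if P a b then 1 else 0) + pairAlt P (b :: t)

open Classical in
/-- Wilber's quantity `λ(S, u, σ)`: 0 if `u` has at most one child; otherwise the number
of adjacent pairs in the restriction of `σ` to the subtree of `u` that do not both lie in
the subtree of one child of `u` and are not both equal to `u`. -/
noncomputable def wilberLam {n : ℕ} (S : RTree (Fin n)) (u : Fin n) (σ : List (Fin n)) : ℕ :=
  if (∃ v w : Fin n, v ≠ w ∧ S.parent v = some u ∧ S.parent w = some u) then
    pairAlt (fun x y =>
      ¬((x = u ∧ y = u) ∨ ∃ ch, S.parent ch = some u ∧ S.Anc ch x ∧ S.Anc ch y))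
      (σ.filter (fun x => decide (S.Anc u x)))
  else 0

/-- `λ'(S, u, σ) = λ(S, u, σ)` plus the number of occurrences of `u` in `σ`. -/
noncomputable def wilberLam' {n : ℕ} (S : RTree (Fin n)) (u : Fin n)
    (σ : List (Fin n)) : ℕ :=
  wilberLam S u σ + σ.count u

/-- Wilber's first lower bound `Λ'(S, σ) = ∑_u λ'(S, u, σ)`. -/
noncomputable def wilberL' {n : ℕ} (S : RTree (Fin n)) (σ : List (Fin n)) : ℕ :=
  ∑ u : Fin n, wilberLam' S u σ

/-- `P` is the projection `T[U]` of `T` onto `U`: its nodes are the nodes of `T` in `U`,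
and the parent of `u` in `P` is the nearest strict ancestor of `u` in `T` that lies
in `U` (which is exactly the result of pruning the vertices outside `U` one by one). -/
def IsProjOn {V : Type} [DecidableEq V] (T : RTree V) (U : Finset V) (P : RTree V) : Prop :=
  P.supp = T.supp ∩ U ∧
  ∀ u w : V, P.parent u = some w ↔
    (u ∈ U ∧ w ∈ U ∧ T.StrictAnc w u ∧ ∀ z ∈ U, T.StrictAnc z u → T.Anc z w)

/-- `P` is obtained from `T` by pruning the vertex `v`. -/
def IsPruneOf {V : Type} [DecidableEq V] (T : RTree V) (v : V) (P : RTree V) : Prop :=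
  IsProjOn T (T.supp.erase v) P

/-- `PruneSeq T l P`: `P` is obtained from `T` by successively pruning the
vertices in the list `l`, in order. -/
def PruneSeq {V : Type} [DecidableEq V] : RTree V → List V → RTree V → Prop
  | T, [], P => P = T
  | T, v :: rest, P => ∃ P', IsPruneOf T v P' ∧ PruneSeq P' rest P

/-- The number of alternations (edges whose endpoints get different colors under `f`)
on the path from the root to `z`. -/
noncomputable def altAt {V K : Type} (f : V → K) (T : RTree V) (z : V) : ℕ :=
  Set.ncard {x | T.Anc x z ∧ ∃ y, T.parent x = some y ∧ f x ≠ f y}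

/-- The alternation number of `T` w.r.t. the coloring `f`: the maximum number of
alternations on a root-to-node path. -/
noncomputable def altNum {V K : Type} (f : V → K) (T : RTree V) : ℕ :=
  T.supp.sup (fun z => altAt f T z)

namespace WilberProof
open List

variable {α : Type} [DecidableEq α]

omit [DecidableEq α] in
open Classical in
lemma pairAlt_cons_cons (P : α → α → Prop) (a b : α) (t : List α) :
    pairAlt P (a :: b :: t) = (if P a b then 1 else 0) + pairAlt P (b :: t) := rfl

omit [DecidableEq α] in
lemma le_pairAlt_cons (P : α → α → Prop) (a : α) (l : List α) :
    pairAlt P l ≤ pairAlt P (a :: l) := by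
  cases l with
  | nil => simp [pairAlt]
  | cons b t => rw [pairAlt_cons_cons]; omega

omit [DecidableEq α] in
lemma pairAlt_mono {P Q : α → α → Prop} :
    ∀ (l : List α), (∀ x ∈ l, ∀ y ∈ l, P x y → Q x y) → pairAlt P l ≤ pairAlt Q l := by
  intro l
  induction l with
  | nil => intro _; simp [pairAlt]
  | cons a t ih =>
    intro h
    cases t with
    | nil => simp [pairAlt]
    | cons b t' =>
      rw [pairAlt_cons_cons, pairAlt_cons_cons]
      have h2 : pairAlt P (b :: t') ≤ pairAlt Q (b :: t') := by
        apply ih; intro x hx y hy hP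
        exact h x (List.mem_cons_of_mem _ hx) y (List.mem_cons_of_mem _ hy) hP
      by_cases hab : P a b
      · have : Q a b := h a (by simp) b (by simp) hab
        simp only [hab, if_true, this]; omega
      · simp only [hab, if_false]; omega

def weave : List α → List α → List α → List α
  | x :: xs, y :: ys, ks => x :: y :: weave xs ys ks
  | [], y :: ys, k :: ks => k :: y :: weave [] ys ks
  | x :: xs, [], k :: ks => k :: x :: weave xs [] ks
  | [], ys, [] => ys
  | xs, [], ks => xs ++ ks

omit [DecidableEq α] in
lemma weave_perm : ∀ (xs ys ks : List α), weave xs ys ks ~ xs ++ ys ++ ks := by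
  intro xs ys ks
  induction xs, ys, ks using weave.induct with
  | case1 x xs y ys ks ih =>
    simp only [weave]
    calc x :: y :: weave xs ys ks ~ x :: y :: (xs ++ ys ++ ks) := (ih.cons y).cons x
      _ ~ (x :: xs) ++ (y :: ys) ++ ks := by
          simp only [List.cons_append, List.append_assoc]
          exact ((List.perm_middle).symm.cons x)
  | case2 y ys k ks ih =>
    simp only [weave]
    calc k :: y :: weave [] ys ks ~ k :: y :: (ys ++ ks) := by
          have := (ih.cons y).cons k; simpa using this
      _ ~ [] ++ (y :: ys) ++ (k :: ks) := by
          simp only [List.nil_append, List.cons_append]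
          exact (List.Perm.swap y k (ys ++ ks)).trans ((List.perm_middle).symm.cons y)
  | case3 x xs k ks ih =>
    simp only [weave]
    calc k :: x :: weave xs [] ks ~ k :: x :: (xs ++ ks) := by
          have := (ih.cons x).cons k; simpa using this
      _ ~ (x :: xs) ++ [] ++ (k :: ks) := by
          simp only [List.append_nil, List.cons_append]
          exact (List.Perm.swap x k (xs ++ ks)).trans ((List.perm_middle).symm.cons x)
  | case4 ys => simp [weave]
  | case5 xs ks h1 h2 => simp [weave]

omit [DecidableEq α] in
lemma weave_length (xs ys ks : List α) :
    (weave xs ys ks).length = xs.length + ys.length + ks.length := by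
  have := (weave_perm xs ys ks).length_eq; simp at this; omega

lemma weave_count (xs ys ks : List α) (i : α) :
    (weave xs ys ks).count i = xs.count i + ys.count i + ks.count i := by
  have := (weave_perm xs ys ks).count_eq i; simp at this; omega

omit [DecidableEq α] in
lemma weave_filter_left (p : α → Bool) :
    ∀ (xs ys ks : List α), (∀ y ∈ ys, p y = false) → (∀ k ∈ ks, p k = false) →
    (weave xs ys ks).filter p = xs.filter p := by
  intro xs ys ks
  induction xs, ys, ks using weave.induct with
  | case1 x xs y ys ks ih =>
    intro hy hk
    simp only [weave]
    rw [List.filter_cons, List.filter_cons, hy y (by simp),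
      ih (fun y hy' => hy y (by simp [hy'])) hk, List.filter_cons]
    simp
  | case2 y ys k ks ih =>
    intro hy hk
    simp only [weave]
    rw [List.filter_cons, List.filter_cons, hy y (by simp), hk k (by simp),
      ih (fun y hy' => hy y (by simp [hy'])) (fun k hk' => hk k (by simp [hk']))]
    simp
  | case3 x xs k ks ih =>
    intro hy hk
    simp only [weave]
    rw [List.filter_cons, List.filter_cons, hk k (by simp),
      ih (by simp) (fun k hk' => hk k (by simp [hk'])), List.filter_cons]
    simp
  | case4 ys =>
    intro hy _
    simp only [weave]
    rw [List.filter_eq_nil_iff.mpr (by intro a ha; simp [hy a ha]), List.filter_nil]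
  | case5 xs ks h1 h2 =>
    intro hy hk
    simp only [weave]
    rw [List.filter_append, show List.filter p ks = [] from
      List.filter_eq_nil_iff.mpr (by intro a ha; simp [hk a ha])]
    simp

omit [DecidableEq α] in
lemma weave_head_cases : ∀ (xs ys ks : List α) (z : α) (zs : List α),
    weave xs ys ks = z :: zs →
    z ∈ xs ∨ z ∈ ks ∨ (z ∈ ys ∧ xs = [] ∧ ks = []) := by
  intro xs ys ks z zs h
  rcases xs with _ | ⟨x, xs⟩ <;> rcases ys with _ | ⟨y, ys⟩ <;> rcases ks with _ | ⟨k, ks⟩ <;>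
    simp [weave] at h <;> aesop

omit [DecidableEq α] in
open Classical in
lemma weave_alt (f : α → ℕ) :
    ∀ (xs ys ks : List α), (∀ x ∈ xs, f x = 0) → (∀ y ∈ ys, f y = 1) → (∀ k ∈ ks, f k = 2) →
    xs.length ≤ ys.length + ks.length → ys.length ≤ xs.length + ks.length →
    xs.length + ys.length ≤ pairAlt (fun u v => f u ≠ f v) (weave xs ys ks) + 1 := by
  intro xs ys ks
  induction xs, ys, ks using weave.induct with
  | case1 x xs y ys ks ih =>
    intro hx hy hk h1 h2
    simp only [weave]
    simp only [List.length_cons] at h1 h2 ⊢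
    have hxy : f x ≠ f y := by rw [hx x (by simp), hy y (by simp)]; omega
    rcases hw : weave xs ys ks with _ | ⟨z, zs⟩
    · have hlen := weave_length xs ys ks
      rw [hw] at hlen; simp only [List.length_nil] at hlen
      obtain rfl : xs = [] := List.length_eq_zero_iff.mp (by omega)
      obtain rfl : ys = [] := List.length_eq_zero_iff.mp (by omega)
      rw [pairAlt_cons_cons, if_pos hxy]
      simp [pairAlt]
    · have hz := weave_head_cases xs ys ks z zs hw
      have hyz : f y ≠ f z := by
        rw [hy y (by simp)]
        rcases hz with hz | hz | ⟨hz, hxs, hks⟩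
        · rw [hx z (by simp [hz])]; omega
        · rw [hk z hz]; omega
        · exfalso
          rw [hxs, hks] at h2
          simp only [List.length_nil] at h2
          obtain rfl : ys = [] := List.length_eq_zero_iff.mp (by omega)
          simp at hz
      have hih := ih (fun a ha => hx a (by simp [ha])) (fun a ha => hy a (by simp [ha])) hk
        (by omega) (by omega)
      rw [hw] at hih
      rw [pairAlt_cons_cons, pairAlt_cons_cons, if_pos hxy, if_pos hyz]
      omega
  | case2 y ys k ks ih =>
    intro hx hy hk h1 h2
    simp only [weave]
    simp only [List.length_cons, List.length_nil] at h1 h2 ⊢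
    have hky : f k ≠ f y := by rw [hk k (by simp), hy y (by simp)]; omega
    rcases hw : weave ([] : List α) ys ks with _ | ⟨z, zs⟩
    · have hlen := weave_length ([] : List α) ys ks
      rw [hw] at hlen; simp only [List.length_nil] at hlen
      obtain rfl : ys = [] := List.length_eq_zero_iff.mp (by omega)
      rw [pairAlt_cons_cons, if_pos hky]
      simp [pairAlt]
    · have hz := weave_head_cases _ _ _ z zs hw
      have hyz : f y ≠ f z := by
        rw [hy y (by simp)]
        rcases hz with hz | hz | ⟨hz, _, hks⟩
        · simp at hz
        · rw [hk z (by simp [hz])]; omega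
        · exfalso
          rw [hks] at h2
          simp only [List.length_nil] at h2
          obtain rfl : ys = [] := List.length_eq_zero_iff.mp (by omega)
          simp at hz
      have hih := ih (by simp) (fun a ha => hy a (by simp [ha])) (fun a ha => hk a (by simp [ha]))
        (by simp) (by simp only [List.length_nil]; omega)
      rw [hw] at hih
      rw [pairAlt_cons_cons, pairAlt_cons_cons, if_pos hky, if_pos hyz]
      simp only [List.length_nil] at hih
      omega
  | case3 x xs k ks ih =>
    intro hx hy hk h1 h2
    simp only [weave]
    simp only [List.length_cons, List.length_nil] at h1 h2 ⊢
    have hkx : f k ≠ f x := by rw [hk k (by simp), hx x (by simp)]; omega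
    rcases hw : weave xs ([] : List α) ks with _ | ⟨z, zs⟩
    · have hlen := weave_length xs ([] : List α) ks
      rw [hw] at hlen; simp only [List.length_nil] at hlen
      obtain rfl : xs = [] := List.length_eq_zero_iff.mp (by omega)
      rw [pairAlt_cons_cons, if_pos hkx]
      simp [pairAlt]
    · have hz := weave_head_cases _ _ _ z zs hw
      have hxz : f x ≠ f z := by
        rw [hx x (by simp)]
        rcases hz with hz | hz | ⟨hz, _, _⟩
        · exfalso
          have hz0 : f z = 0 := hx z (List.mem_cons_of_mem _ hz)
          rcases hks2 : ks with _ | ⟨k', ks'⟩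
          · rw [hks2] at hw h1
            simp only [List.length_nil] at h1
            obtain rfl : xs = [] := List.length_eq_zero_iff.mp (by omega)
            simp [weave] at hw
          · rcases hxs : xs with _ | ⟨x', xs'⟩
            · rw [hxs] at hz; simp at hz
            · rw [hxs, hks2] at hw
              simp only [weave] at hw
              have hzk : k' = z := by injection hw
              have h2' : f k' = 2 := hk k' (by simp [hks2])
              rw [hzk] at h2'
              omega
        · rw [hk z (by simp [hz])]; omega
        · simp at hz
      have hih := ih (fun a ha => hx a (by simp [ha])) (by simp) (fun a ha => hk a (by simp [ha]))
        (by simp only [List.length_nil]; omega) (by simp)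
      rw [hw] at hih
      rw [pairAlt_cons_cons, pairAlt_cons_cons, if_pos hkx, if_pos hxz]
      simp only [List.length_nil] at hih
      omega
  | case4 ys =>
    intro hx hy hk h1 h2
    simp only [weave]
    simp only [List.length_nil] at h2 ⊢
    obtain rfl : ys = [] := List.length_eq_zero_iff.mp (by omega)
    simp [pairAlt]
  | case5 xs ks hc1 hc2 =>
    intro hx hy hk ha hb
    simp only [weave]
    rcases xs with _ | ⟨x, xs⟩
    · simp
    · rcases ks with _ | ⟨k, ks⟩
      · simp only [List.length_nil, List.length_cons] at ha; omega
      · exact (hc1 x xs k ks rfl rfl).elim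

omit [DecidableEq α] in
lemma weave_filter_right (p : α → Bool) :
    ∀ (xs ys ks : List α), (∀ x ∈ xs, p x = false) → (∀ k ∈ ks, p k = false) →
    (weave xs ys ks).filter p = ys.filter p := by
  intro xs ys ks
  induction xs, ys, ks using weave.induct with
  | case1 x xs y ys ks ih =>
    intro hxx hk
    simp only [weave]
    rw [List.filter_cons, List.filter_cons, hxx x (by simp),
      ih (fun a ha => hxx a (by simp [ha])) hk, List.filter_cons]
    simp
  | case2 y ys k ks ih =>
    intro hxx hk
    simp only [weave]
    rw [List.filter_cons, List.filter_cons, hk k (by simp),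
      ih (by simp) (fun a ha => hk a (by simp [ha])), List.filter_cons]
    simp
  | case3 x xs k ks ih =>
    intro hxx hk
    simp only [weave]
    rw [List.filter_cons, List.filter_cons, hk k (by simp), hxx x (by simp),
      ih (fun a ha => hxx a (by simp [ha])) (fun a ha => hk a (by simp [ha]))]
    simp
  | case4 ys => intro _ _; simp [weave]
  | case5 xs ks hc1 hc2 =>
    intro hxx hk
    simp only [weave]
    rw [List.filter_append, show List.filter p xs = [] from
      List.filter_eq_nil_iff.mpr (by intro a ha; simp [hxx a ha]),
      show List.filter p ks = [] from
      List.filter_eq_nil_iff.mpr (by intro a ha; simp [hk a ha])]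
    simp

inductive BT (β : Type) where
  | leaf : BT β
  | node : BT β → β → BT β → BT β
deriving DecidableEq

namespace BT

variable {α : Type} [DecidableEq α]

def keys : BT α → List α
  | .leaf => []
  | .node l k r => keys l ++ k :: keys r

def rootk : BT α → Option α
  | .leaf => none
  | .node _ k _ => some k

def wt (w : α → ℕ) (t : BT α) : ℕ := (t.keys.map w).sum

def nseq (w : α → ℕ) : BT α → List α
  | .leaf => []
  | .node l k r => WilberProof.weave (nseq w l) (nseq w r) (List.replicate (w k) k)

def pgo : BT α → Option α → α → Option α
  | .leaf, _, _ => none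
  | .node l k r, p, x =>
      if x = k then p else if x ∈ keys l then pgo l (some k) x else pgo r (some k) x

def lamb (w : α → ℕ) : BT α → ℕ
  | .leaf => 0
  | .node l k r =>
      (if l ≠ .leaf ∧ r ≠ .leaf then wt w l + wt w r - 1 else 0) + lamb w l + lamb w r

lemma keys_eq_nil_iff (t : BT α) : keys t = [] ↔ t = .leaf := by
  cases t <;> simp [keys]

lemma rootk_mem {t : BT α} {z : α} (h : rootk t = some z) : z ∈ keys t := by
  cases t with
  | leaf => simp [rootk] at h
  | node l k r => simp [rootk] at h; simp [keys, h]

omit [DecidableEq α] in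
lemma wt_node (w : α → ℕ) (l : BT α) (k : α) (r : BT α) :
    wt w (.node l k r) = wt w l + w k + wt w r := by
  simp [wt, keys]; ring

lemma mem_nseq (w : α → ℕ) : ∀ (t : BT α) (x : α), x ∈ nseq w t → x ∈ keys t := by
  intro t
  induction t with
  | leaf => simp [nseq]
  | node l k r ihl ihr =>
    intro x hx
    rw [nseq, (WilberProof.weave_perm _ _ _).mem_iff] at hx
    simp only [List.mem_append, List.mem_replicate] at hx
    simp only [keys, List.mem_append, List.mem_cons]
    rcases hx with (hx | hx) | hx
    · exact Or.inl (ihl x hx)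
    · exact Or.inr (Or.inr (ihr x hx))
    · exact Or.inr (Or.inl hx.2)

lemma length_nseq (w : α → ℕ) : ∀ (t : BT α), (nseq w t).length = wt w t := by
  intro t
  induction t with
  | leaf => simp [nseq, wt, keys]
  | node l k r ihl ihr =>
    rw [nseq, WilberProof.weave_length, ihl, ihr, wt_node]
    simp; ring

lemma count_nseq (w : α → ℕ) : ∀ (t : BT α), (keys t).Nodup → ∀ i : α,
    (nseq w t).count i = if i ∈ keys t then w i else 0 := by
  intro t
  induction t with
  | leaf => simp [nseq, keys]
  | node l k r ihl ihr =>
    intro hnd i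
    have hndl : (keys l).Nodup := (List.nodup_append.mp (by simpa [keys] using hnd)).1
    have hndkr : (k :: keys r).Nodup := (List.nodup_append.mp (by simpa [keys] using hnd)).2.1
    have hdisj : ∀ a ∈ keys l, a ∉ (k :: keys r) := by
      have := (List.nodup_append'.mp (by simpa [keys] using hnd)).2.2
      intro a ha hb; exact this ha hb
    have hndr : (keys r).Nodup := hndkr.of_cons
    have hknr : k ∉ keys r := by simp at hndkr; exact hndkr.1
    rw [nseq, WilberProof.weave_count, ihl hndl i, ihr hndr i, List.count_replicate]
    simp only [keys, List.mem_append, List.mem_cons]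
    by_cases h1 : i ∈ keys l
    · have h2 : i ∉ k :: keys r := hdisj i h1
      simp only [List.mem_cons, not_or] at h2
      simp [h1, h2.1, h2.2, if_neg]
      intro h; exact absurd h.symm h2.1
    · by_cases h2 : i = k
      · subst h2
        simp [h1, hknr]
      · by_cases h3 : i ∈ keys r
        · simp [h1, h2, h3]; intro h; exact absurd h.symm h2
        · simp [h1, h2, h3]; intro h; exact absurd h.symm h2

def medIdx (w : α → ℕ) : ℕ → List α → ℕ
  | _, [] => 0
  | t, x :: xs => if t ≤ 2 * w x then 0 else medIdx w (t - 2 * w x) xs + 1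

omit [DecidableEq α] in
lemma medIdx_lt (w : α → ℕ) : ∀ (L : List α) (t : ℕ), L ≠ [] →
    t ≤ 2 * ((L.map w).sum) → medIdx w t L < L.length := by
  intro L
  induction L with
  | nil => intro t h; exact absurd rfl h
  | cons x xs ih =>
    intro t _ hle
    rw [medIdx]
    by_cases h : t ≤ 2 * w x
    · simp [h]
    · rcases xs with _ | ⟨y, ys⟩
      · exfalso; apply h; simpa using hle
      · simp only [h, if_neg, if_false]
        have := ih (t - 2 * w x) (by simp) (by simp at hle ⊢; omega)
        simp at this ⊢; omega

omit [DecidableEq α] in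
lemma medIdx_take_lt (w : α → ℕ) : ∀ (L : List α) (t : ℕ), 1 ≤ t →
    2 * (((L.take (medIdx w t L)).map w).sum) < t := by
  intro L
  induction L with
  | nil => intro t ht; simp [medIdx]; omega
  | cons x xs ih =>
    intro t ht
    rw [medIdx]
    by_cases h : t ≤ 2 * w x
    · simp [h]; omega
    · simp only [h, if_neg, if_false, List.take_succ_cons, List.map_cons, List.sum_cons]
      have := ih (t - 2 * w x) (by omega)
      omega

omit [DecidableEq α] in
lemma medIdx_take_ge (w : α → ℕ) : ∀ (L : List α) (t : ℕ), L ≠ [] →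
    t ≤ 2 * ((L.map w).sum) →
    t ≤ 2 * (((L.take (medIdx w t L + 1)).map w).sum) := by
  intro L
  induction L with
  | nil => intro t h; exact absurd rfl h
  | cons x xs ih =>
    intro t _ hle
    rw [medIdx]
    by_cases h : t ≤ 2 * w x
    · simpa [h] using h
    · rcases xs with _ | ⟨y, ys⟩
      · exfalso; apply h; simpa using hle
      · simp only [h, if_neg, if_false, List.take_succ_cons, List.map_cons, List.sum_cons]
        have := ih (t - 2 * w x) (by simp) (by simp at hle ⊢; omega)
        simp only [List.take_succ_cons, List.map_cons, List.sum_cons] at this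
        omega

def build (w : α → ℕ) : List α → BT α
  | [] => .leaf
  | x :: xs =>
      .node (build w ((x :: xs).take (medIdx w (((x :: xs).map w).sum) (x :: xs))))
            ((x :: xs).getD (medIdx w (((x :: xs).map w).sum) (x :: xs)) x)
            (build w ((x :: xs).drop (medIdx w (((x :: xs).map w).sum) (x :: xs) + 1)))
  termination_by L => L.length
  decreasing_by
  · have hj := medIdx_lt w (x :: xs) (((x :: xs).map w).sum) (by simp) (by omega)
    simp only [List.map_cons, List.sum_cons, List.length_cons] at hj ⊢
    rw [List.length_take]
    omega
  · simp only [List.length_drop, List.length_cons]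
    omega

lemma keys_build (w : α → ℕ) : ∀ (L : List α), keys (build w L) = L := by
  intro L
  induction L using build.induct w with
  | case1 => simp [build, keys]
  | case2 x xs ih1 ih2 =>
    rw [build, keys, ih1, ih2]
    have hj := medIdx_lt w (x :: xs) (((x :: xs).map w).sum) (by simp) (by omega)
    set j := medIdx w (((x :: xs).map w).sum) (x :: xs) with hjdef
    rw [List.getD_eq_getElem (x :: xs) x hj]
    rw [show (x :: xs)[j] :: (x :: xs).drop (j + 1) = (x :: xs).drop j from
      List.getElem_cons_drop hj]
    exact List.take_append_drop j (x :: xs)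

end BT

section OccSec

variable {α : Type} [DecidableEq α]

open BT

inductive Sub : BT α → BT α → Prop
  | refl (t : BT α) : Sub t t
  | left {s l r : BT α} {k : α} : Sub s l → Sub s (.node l k r)
  | right {s l r : BT α} {k : α} : Sub s r → Sub s (.node l k r)

omit [DecidableEq α] in
lemma Sub.trans' {s t u : BT α} (h1 : Sub s t) (h2 : Sub t u) : Sub s u := by
  induction h2 with
  | refl => exact h1
  | left _ ih => exact Sub.left ih
  | right _ ih => exact Sub.right ih

omit [DecidableEq α] in
lemma Sub.keys_sublist {s t : BT α} (h : Sub s t) : keys s <+ keys t := by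
  induction h with
  | refl => exact List.Sublist.refl _
  | left _ ih =>
    refine ih.trans ?_
    rw [BT.keys]
    exact List.sublist_append_left _ _
  | right _ ih =>
    refine ih.trans ?_
    rw [BT.keys]
    exact (List.sublist_cons_self _ _).trans (List.sublist_append_right _ _)

omit [DecidableEq α] in
lemma Sub.keys_subset {s t : BT α} (h : Sub s t) : ∀ x ∈ keys s, x ∈ keys t :=
  fun x hx => h.keys_sublist.subset hx

omit [DecidableEq α] in
lemma Sub.keys_infix {s t : BT α} (h : Sub s t) : keys s <:+: keys t := by
  induction h with
  | refl => exact List.infix_refl _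
  | left _ ih =>
    refine ih.trans ?_
    rw [BT.keys]
    exact (List.prefix_append _ _).isInfix
  | right _ ih =>
    refine ih.trans ?_
    rw [BT.keys]
    exact ((List.suffix_cons _ _).trans (List.suffix_append _ _)).isInfix

inductive Occ (T : BT α) : BT α → Option α → Prop
  | top : Occ T T none
  | left {l r : BT α} {k : α} {p : Option α} : Occ T (.node l k r) p → Occ T l (some k)
  | right {l r : BT α} {k : α} {p : Option α} : Occ T (.node l k r) p → Occ T r (some k)

omit [DecidableEq α] in
lemma Occ.sub {T t : BT α} {p : Option α} (h : Occ T t p) : Sub t T := by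
  induction h with
  | top => exact Sub.refl _
  | left _ ih => exact Sub.trans' (Sub.left (Sub.refl _)) ih
  | right _ ih => exact Sub.trans' (Sub.right (Sub.refl _)) ih

variable {T : BT α}

omit [DecidableEq α] in
lemma Occ.nodup (hnd : (keys T).Nodup) {t : BT α} {p : Option α} (h : Occ T t p) :
    (keys t).Nodup := List.Nodup.sublist h.sub.keys_sublist hnd

omit [DecidableEq α] in
lemma nodup_node {l r : BT α} {k : α} (h : (keys (.node l k r : BT α)).Nodup) :
    (keys l).Nodup ∧ (keys r).Nodup ∧ k ∉ keys l ∧ k ∉ keys r ∧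
      ∀ a ∈ keys l, a ∉ keys r := by
  rw [BT.keys] at h
  rw [List.nodup_append'] at h
  obtain ⟨h1, h2, h3⟩ := h
  rw [List.nodup_cons] at h2
  refine ⟨h1, h2.2, fun hk => h3 hk (by simp), h2.1, fun a ha har => h3 ha (by simp [har])⟩

lemma pgo_not_mem : ∀ (t : BT α) (p : Option α) (x : α), x ∉ keys t → pgo t p x = none := by
  intro t
  induction t with
  | leaf => intros; rfl
  | node l k r ihl ihr =>
    intro p x hx
    rw [BT.keys] at hx
    simp only [List.mem_append, List.mem_cons, not_or] at hx
    rw [BT.pgo, if_neg hx.2.1, if_neg hx.1]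
    exact ihr _ x hx.2.2

lemma occ_pf (hnd : (keys T).Nodup) {t : BT α} {p : Option α} (ho : Occ T t p) :
    ∀ x ∈ keys t, pgo T none x = pgo t p x := by
  induction ho with
  | top => intros; rfl
  | @left l r k p h ih =>
    intro x hx
    obtain ⟨_, _, hkl, _, _⟩ := nodup_node (Occ.nodup hnd h)
    rw [ih x (by rw [BT.keys]; simp [hx])]
    rw [BT.pgo, if_neg (by rintro rfl; exact hkl hx), if_pos hx]
  | @right l r k p h ih =>
    intro x hx
    obtain ⟨_, _, _, hkr, hdisj⟩ := nodup_node (Occ.nodup hnd h)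
    rw [ih x (by rw [BT.keys]; simp [hx])]
    rw [BT.pgo, if_neg (by rintro rfl; exact hkr hx), if_neg (fun hxl => hdisj x hxl hx)]

lemma occ_parent_root (hnd : (keys T).Nodup) {l r : BT α} {k : α} {p : Option α}
    (ho : Occ T (.node l k r) p) : pgo T none k = p := by
  have := occ_pf hnd ho k (by rw [BT.keys]; simp)
  rwa [pgo, if_pos rfl] at this

lemma pgo_some_cases : ∀ (t : BT α) (q : Option α) (x z : α), pgo t q x = some z →
    (rootk t = some x ∧ q = some z) ∨
    ∃ l' k' r', Sub (BT.node l' k' r') t ∧ z = k' ∧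
      (rootk l' = some x ∨ rootk r' = some x) := by
  intro t
  induction t with
  | leaf => intro q x z h; simp [BT.pgo] at h
  | node l k r ihl ihr =>
    intro q x z h
    rw [BT.pgo] at h
    by_cases hxk : x = k
    · subst hxk; rw [if_pos rfl] at h; exact Or.inl ⟨rfl, h⟩
    · rw [if_neg hxk] at h
      by_cases hxl : x ∈ keys l
      · rw [if_pos hxl] at h
        rcases ihl (some k) x z h with ⟨h1, h2⟩ | ⟨l', k', r', hs, rfl, hr⟩
        · right
          refine ⟨l, k, r, Sub.refl _, ?_, Or.inl h1⟩
          injection h2.symm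
        · exact Or.inr ⟨l', z, r', Sub.left hs, rfl, hr⟩
      · rw [if_neg hxl] at h
        rcases ihr (some k) x z h with ⟨h1, h2⟩ | ⟨l', k', r', hs, rfl, hr⟩
        · right
          refine ⟨l, k, r, Sub.refl _, ?_, Or.inr h1⟩
          injection h2.symm
        · exact Or.inr ⟨l', z, r', Sub.right hs, rfl, hr⟩

lemma key_to_sub : ∀ (t : BT α) (z : α), z ∈ keys t → ∃ l2 r2, Sub (BT.node l2 z r2) t := by
  intro t
  induction t with
  | leaf => simp [BT.keys]
  | node l k r ihl ihr =>
    intro z hz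
    rw [BT.keys] at hz
    simp only [List.mem_append, List.mem_cons] at hz
    rcases hz with hz | rfl | hz
    · obtain ⟨l2, r2, hs⟩ := ihl z hz; exact ⟨l2, r2, Sub.left hs⟩
    · exact ⟨l, r, Sub.refl _⟩
    · obtain ⟨l2, r2, hs⟩ := ihr z hz; exact ⟨l2, r2, Sub.right hs⟩

lemma sub_root_unique : ∀ (t : BT α), (keys t).Nodup → ∀ t1 t2 : BT α, Sub t1 t → Sub t2 t →
    ∀ z : α, rootk t1 = some z → rootk t2 = some z → t1 = t2 := by
  intro t
  induction t with
  | leaf =>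
    intro _ t1 t2 h1 h2 z hz1 hz2
    cases h1
    simp [BT.rootk] at hz1
  | node l k r ihl ihr =>
    intro hnd' t1 t2 h1 h2 z hz1 hz2
    obtain ⟨hndl, hndr, hkl, hkr, hdisj⟩ := nodup_node hnd'
    cases h1 with
    | refl =>
      have hzk : z = k := by rw [BT.rootk] at hz1; injection hz1.symm
      subst hzk
      cases h2 with
      | refl => rfl
      | left h => exact absurd (h.keys_subset z (rootk_mem hz2)) hkl
      | right h => exact absurd (h.keys_subset z (rootk_mem hz2)) hkr
    | left h =>
      cases h2 with
      | refl =>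
        have hzk : z = k := by rw [BT.rootk] at hz2; injection hz2.symm
        subst hzk
        exact absurd (h.keys_subset z (rootk_mem hz1)) hkl
      | left h' => exact ihl hndl t1 t2 h h' z hz1 hz2
      | right h' =>
        exact absurd (h'.keys_subset z (rootk_mem hz2))
          (hdisj z (h.keys_subset z (rootk_mem hz1)))
    | right h =>
      cases h2 with
      | refl =>
        have hzk : z = k := by rw [BT.rootk] at hz2; injection hz2.symm
        subst hzk
        exact absurd (h.keys_subset z (rootk_mem hz1)) hkr
      | left h' =>
        exact absurd (h.keys_subset z (rootk_mem hz1))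
          (hdisj z (h'.keys_subset z (rootk_mem hz2)))
      | right h' => exact ihr hndr t1 t2 h h' z hz1 hz2

lemma mem_of_rel (hnd : (keys T).Nodup) {t : BT α} {p : Option α} (ho : Occ T t p)
    {x z : α} (hz : z ∈ keys t) (hrel : pgo T none x = some z) : x ∈ keys t := by
  rcases pgo_some_cases T none x z hrel with ⟨_, h⟩ | ⟨l', k', r', hs, rfl, hr⟩
  · exact absurd h (by simp)
  · obtain ⟨l2, r2, hs2⟩ := key_to_sub t z hz
    have heq : (BT.node l' z r' : BT α) = BT.node l2 z r2 :=
      sub_root_unique T hnd _ _ hs (Sub.trans' hs2 ho.sub) z rfl rfl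
    obtain ⟨rfl, rfl⟩ : l' = l2 ∧ r' = r2 := by
      injection heq with e1 e2 e3
      exact ⟨e1, e3⟩
    rcases hr with h | h
    · exact hs2.keys_subset x (by rw [BT.keys]; simp [rootk_mem h])
    · exact hs2.keys_subset x (by rw [BT.keys]; simp [rootk_mem h])

lemma rtg_root_of_mem (hnd : (keys T).Nodup) :
    ∀ (t : BT α) (p : Option α), Occ T t p → ∀ x ∈ keys t, ∀ u : α, rootk t = some u →
    Relation.ReflTransGen (fun a b => pgo T none a = some b) x u := by
  intro t
  induction t with
  | leaf => simp [BT.keys]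
  | node l k r ihl ihr =>
    intro p ho x hx u hu
    have huk : u = k := by rw [BT.rootk] at hu; injection hu.symm
    subst huk
    rw [BT.keys] at hx
    simp only [List.mem_append, List.mem_cons] at hx
    rcases hx with hx | rfl | hx
    · obtain ⟨l1, a, r1, rfl⟩ : ∃ l1 a r1, l = BT.node l1 a r1 := by
        cases l with
        | leaf => simp [BT.keys] at hx
        | node l1 a r1 => exact ⟨l1, a, r1, rfl⟩
      have hstep : pgo T none a = some u := occ_parent_root hnd (Occ.left ho)
      exact (ihl (some u) (Occ.left ho) x hx a rfl).tail hstep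
    · exact Relation.ReflTransGen.refl
    · obtain ⟨l1, a, r1, rfl⟩ : ∃ l1 a r1, r = BT.node l1 a r1 := by
        cases r with
        | leaf => simp [BT.keys] at hx
        | node l1 a r1 => exact ⟨l1, a, r1, rfl⟩
      have hstep : pgo T none a = some u := occ_parent_root hnd (Occ.right ho)
      exact (ihr (some u) (Occ.right ho) x hx a rfl).tail hstep

lemma anc_iff_mem (hnd : (keys T).Nodup) {t : BT α} {p : Option α} (ho : Occ T t p)
    {u : α} (hu : rootk t = some u) (x : α) :
    Relation.ReflTransGen (fun a b => pgo T none a = some b) x u ↔ x ∈ keys t := by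
  constructor
  · intro h
    induction h using Relation.ReflTransGen.head_induction_on with
    | refl => exact rootk_mem hu
    | head hab _ ih => exact mem_of_rel hnd ho ih hab
  · intro h
    exact rtg_root_of_mem hnd t p ho x h u hu

lemma nseq_filter (hnd : (keys T).Nodup) (w : α → ℕ) {t : BT α} {p : Option α}
    (ho : Occ T t p) :
    (nseq w T).filter (fun x => decide (x ∈ keys t)) = nseq w t := by
  induction ho with
  | top =>
    apply List.filter_eq_self.mpr
    intro a ha; simpa using mem_nseq w T a ha
  | @left l r k p h ih =>
    obtain ⟨hndl, hndr, hkl, hkr, hdisj⟩ := nodup_node (Occ.nodup hnd h)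
    have step1 : ((nseq w T).filter (fun x => decide (x ∈ keys (.node l k r)))).filter
        (fun x => decide (x ∈ keys l)) = (nseq w T).filter (fun x => decide (x ∈ keys l)) := by
      rw [List.filter_filter]
      apply List.filter_congr
      intro x _
      by_cases hxl : x ∈ keys l
      · simp [hxl, BT.keys]
      · simp [hxl]
    rw [← step1, ih, nseq, WilberProof.weave_filter_left]
    · apply List.filter_eq_self.mpr
      intro a ha; simpa using mem_nseq w l a ha
    · intro y hy
      have := mem_nseq w r y hy
      simp only [decide_eq_false_iff_not]
      exact fun hc => hdisj y hc this
    · intro a ha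
      rw [List.eq_of_mem_replicate ha]
      simp [hkl]
  | @right l r k p h ih =>
    obtain ⟨hndl, hndr, hkl, hkr, hdisj⟩ := nodup_node (Occ.nodup hnd h)
    have step1 : ((nseq w T).filter (fun x => decide (x ∈ keys (.node l k r)))).filter
        (fun x => decide (x ∈ keys r)) = (nseq w T).filter (fun x => decide (x ∈ keys r)) := by
      rw [List.filter_filter]
      apply List.filter_congr
      intro x _
      by_cases hxr : x ∈ keys r
      · simp [hxr, BT.keys]
      · simp [hxr]
    rw [← step1, ih, nseq, WilberProof.weave_filter_right]
    · apply List.filter_eq_self.mpr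
      intro a ha; simpa using mem_nseq w r a ha
    · intro y hy
      have := mem_nseq w l y hy
      simp only [decide_eq_false_iff_not]
      exact fun hc => hdisj y this hc
    · intro a ha
      rw [List.eq_of_mem_replicate ha]
      simp [hkr]

end OccSec

section Analytic
open Real

noncomputable def ulog (p W : ℕ) : ℝ :=
  if 0 < p then (p : ℝ) * (Real.logb 2 W - Real.logb 2 p) else 0

lemma logb_sub_eq {p W : ℕ} (hp : 0 < p) (hW : 0 < W) :
    Real.logb 2 W - Real.logb 2 p = (Real.log W - Real.log p) / Real.log 2 := by
  rw [Real.logb, Real.logb]; ring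

lemma ulog_le (p W : ℕ) (K : ℝ) (hK : 1 ≤ K) (hpW : p ≤ W) :
    ulog p W * Real.log 2 ≤ (p : ℝ) * Real.log K + (W : ℝ) / K - p := by
  have hK0 : (0 : ℝ) < K := lt_of_lt_of_le one_pos hK
  rw [ulog]
  by_cases hp : 0 < p
  · have hW : 0 < W := lt_of_lt_of_le hp hpW
    have hpR : (0 : ℝ) < p := by exact_mod_cast hp
    have hWR : (0 : ℝ) < W := by exact_mod_cast hW
    rw [if_pos hp, logb_sub_eq hp hW]
    have hlog2 : Real.log 2 ≠ 0 := ne_of_gt (Real.log_pos (by norm_num))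
    rw [show (p : ℝ) * ((Real.log W - Real.log p) / Real.log 2) * Real.log 2 =
      (p : ℝ) * (Real.log W - Real.log p) from by field_simp]
    have key : Real.log W - Real.log p = Real.log K + Real.log ((W : ℝ) / (K * p)) := by
      rw [← Real.log_mul (ne_of_gt hK0) (by positivity)]
      rw [show K * ((W : ℝ) / (K * p)) = (W : ℝ) / p by field_simp]
      rw [Real.log_div (ne_of_gt hWR) (ne_of_gt hpR)]
    rw [key]
    have hle : Real.log ((W : ℝ) / (K * p)) ≤ (W : ℝ) / (K * p) - 1 :=
      Real.log_le_sub_one_of_pos (by positivity)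
    have : (p : ℝ) * (Real.log K + Real.log ((W : ℝ) / (K * p))) ≤
        (p : ℝ) * Real.log K + (p : ℝ) * ((W : ℝ) / (K * p) - 1) := by
      rw [mul_add]
      gcongr
    refine this.trans ?_
    have heq : (p : ℝ) * ((W : ℝ) / (K * p) - 1) = (W : ℝ) / K - p := by
      field_simp
    rw [heq]; linarith [le_refl ((p:ℝ) * Real.log K)]
  · rw [if_neg hp]
    have hp0 : p = 0 := by omega
    subst hp0
    simp
    positivity

lemma three_bound (a b c W : ℕ) (h : a + b + c = W) :
    ulog a W + ulog b W + ulog c W ≤ 2 * W := by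
  have hl2 : (0 : ℝ) < Real.log 2 := Real.log_pos (by norm_num)
  have e4 : Real.log 4 = 2 * Real.log 2 := by
    rw [show (4 : ℝ) = 2 ^ (2 : ℕ) by norm_num, Real.log_pow]
    push_cast; ring
  have h1 := ulog_le a W 4 (by norm_num) (by omega)
  have h2 := ulog_le b W 4 (by norm_num) (by omega)
  have h3 := ulog_le c W 4 (by norm_num) (by omega)
  have hcast : (a : ℝ) + b + c = (W : ℝ) := by exact_mod_cast congrArg (fun x : ℕ => (x : ℝ)) h
  rw [← mul_le_mul_iff_left₀ hl2]
  have hW0 : (0 : ℝ) ≤ (W : ℝ) := by positivity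
  nlinarith [h1, h2, h3]

lemma two_bound (b c W : ℕ) (h : b + c = W) :
    ulog b W + ulog c W ≤ W := by
  have hl2 : (0 : ℝ) < Real.log 2 := Real.log_pos (by norm_num)
  have h2 := ulog_le b W 2 (by norm_num) (by omega)
  have h3 := ulog_le c W 2 (by norm_num) (by omega)
  have hcast : (b : ℝ) + c = (W : ℝ) := by exact_mod_cast congrArg (fun x : ℕ => (x : ℝ)) h
  rw [← mul_le_mul_iff_left₀ hl2]
  nlinarith [h2, h3]

lemma logb_sixteen : Real.logb 2 16 = 4 := by
  rw [show (16 : ℝ) = 2 ^ (4 : ℕ) by norm_num, Real.logb_pow, Real.logb_self_eq_one] <;> norm_num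

lemma tC_eq (c W : ℕ) (hc : 0 < c) (hcW : c ≤ W) :
    (c : ℝ) * Real.logb 2 ((W : ℝ) / (16 * c)) = ulog c W - 4 * c := by
  have hW : 0 < W := lt_of_lt_of_le hc hcW
  have hcR : (0 : ℝ) < c := by exact_mod_cast hc
  have hWR : (0 : ℝ) < W := by exact_mod_cast hW
  rw [ulog, if_pos hc]
  rw [Real.logb_div (ne_of_gt hWR) (by positivity),
    Real.logb_mul (by norm_num) (ne_of_gt hcR), logb_sixteen]
  ring

end Analytic

section ESum

variable {α : Type} [DecidableEq α]

open BT

noncomputable def eTerm (w : α → ℕ) (W : ℕ) (x : α) : ℝ :=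
  if 0 < w x then (w x : ℝ) * Real.logb 2 ((W : ℝ) / (16 * w x)) else 0

noncomputable def eSum (w : α → ℕ) (t : BT α) : ℝ :=
  ((keys t).map (eTerm w (wt w t))).sum

omit [DecidableEq α] in
lemma eTerm_pt (w : α → ℕ) (x : α) (W V : ℕ) (hW : 0 < W) (hV : 0 < V) :
    eTerm w W x = eTerm w V x + (w x : ℝ) * (Real.logb 2 W - Real.logb 2 V) := by
  rw [eTerm, eTerm]
  by_cases h : 0 < w x
  · rw [if_pos h, if_pos h]
    have hWR : (0:ℝ) < W := by exact_mod_cast hW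
    have hVR : (0:ℝ) < V := by exact_mod_cast hV
    have hxR : (0:ℝ) < w x := by exact_mod_cast h
    rw [Real.logb_div (ne_of_gt hWR) (by positivity),
        Real.logb_div (ne_of_gt hVR) (by positivity)]
    ring
  · rw [if_neg h, if_neg h]
    have : w x = 0 := by omega
    rw [this]
    push_cast; ring

omit [DecidableEq α] in
lemma eTerm_shift (w : α → ℕ) (K : List α) (W V : ℕ) (hW : 0 < W) (hV : 0 < V) :
    ((K.map (eTerm w W)).sum : ℝ) =
      (K.map (eTerm w V)).sum + (((K.map w).sum : ℕ) : ℝ) * (Real.logb 2 W - Real.logb 2 V) := by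
  induction K with
  | nil => simp
  | cons a K ih =>
    simp only [List.map_cons, List.sum_cons, ih]
    rw [eTerm_pt w a W V hW hV]
    push_cast
    ring

omit [DecidableEq α] in
lemma eSum_zero_list (w : α → ℕ) (K : List α) (W : ℕ) (h : (K.map w).sum = 0) :
    ((K.map (eTerm w W)).sum : ℝ) = 0 := by
  apply List.sum_eq_zero
  intro e he
  obtain ⟨x, hx, rfl⟩ := List.mem_map.mp he
  have hx0 : w x = 0 := by
    have := List.sum_eq_zero_iff.mp h (w x) (List.mem_map_of_mem (f := w) hx)
    exact this
  rw [eTerm, if_neg (by omega)]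

omit [DecidableEq α] in
lemma ulog_self (c : ℕ) : ulog c c = 0 := by
  rw [ulog]
  by_cases h : 0 < c
  · rw [if_pos h]; ring
  · rw [if_neg h]

lemma main_entropy (w : α → ℕ) : ∀ L : List α,
    eSum w (build w L) ≤ 4 * (lamb w (build w L) : ℝ) := by
  intro L
  induction L using build.induct w with
  | case1 => simp [build, eSum, BT.keys, lamb]
  | case2 x xs ih1 ih2 =>
    have hbuild : build w (x :: xs) = BT.node
        (build w ((x :: xs).take (medIdx w (((x :: xs).map w).sum) (x :: xs))))
        ((x :: xs).getD (medIdx w (((x :: xs).map w).sum) (x :: xs)) x)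
        (build w ((x :: xs).drop (medIdx w (((x :: xs).map w).sum) (x :: xs) + 1))) := by
      rw [build]
    set W := (((x :: xs).map w).sum) with hWdef
    set j := medIdx w W (x :: xs) with hjdef
    set l := build w ((x :: xs).take j) with hldef
    set key := (x :: xs).getD j x with hkeydef
    set r := build w ((x :: xs).drop (j + 1)) with hrdef
    set a := wt w l with hadef
    set b := wt w r with hbdef
    set c := w key with hcdef
    have hjlt : j < (x :: xs).length := medIdx_lt w (x :: xs) W (by simp) (by omega)
    have hkeysl : keys l = (x :: xs).take j := keys_build w _
    have hkeysr : keys r = (x :: xs).drop (j + 1) := keys_build w _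
    have hkeyget : key = (x :: xs)[j] := List.getD_eq_getElem (x :: xs) x hjlt
    have hwtnode : wt w (BT.node l key r) = W := by
      rw [show (BT.node l key r) = build w (x :: xs) from hbuild.symm]
      rw [wt, keys_build]
    have habc : a + c + b = W := by
      rw [← hwtnode, wt_node]
    have hma : 2 * a ≤ W - 1 ∨ W = 0 := by
      by_cases hW1 : 1 ≤ W
      · left
        have := medIdx_take_lt w (x :: xs) W hW1
        rw [← hjdef] at this
        have ha' : a = (((x :: xs).take j).map w).sum := by rw [hadef, wt, hkeysl]
        omega
      · right; omega
    have hmac : W ≤ 2 * (a + c) := by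
      have := medIdx_take_ge w (x :: xs) W (by simp) (by omega)
      rw [← hjdef] at this
      have htake : (x :: xs).take (j + 1) = (x :: xs).take j ++ [(x :: xs)[j]] := by
        rw [← List.take_concat_get hjlt]
        simp
      rw [htake] at this
      simp only [List.map_append, List.sum_append, List.map_cons, List.sum_cons,
        List.map_nil, List.sum_nil] at this
      have ha' : a = (((x :: xs).take j).map w).sum := by rw [hadef, wt, hkeysl]
      rw [← hkeyget] at this
      omega
    rw [hbuild]
    by_cases hW0 : W = 0
    · have hz : eSum w (BT.node l key r) = 0 := by
        rw [eSum, hwtnode]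
        apply eSum_zero_list
        rw [show BT.keys (BT.node l key r) = (x :: xs) from by
          rw [← hbuild]; exact keys_build w _]
        omega
      rw [hz]
      positivity
    -- main case W ≥ 1
    have hsplit : eSum w (BT.node l key r) =
        ((keys l).map (eTerm w W)).sum + eTerm w W key + ((keys r).map (eTerm w W)).sum := by
      rw [eSum, hwtnode, BT.keys]
      simp [List.map_append, List.sum_append]
      ring
    have hLpart : ((keys l).map (eTerm w W)).sum = eSum w l + ulog a W := by
      by_cases ha : 0 < a
      · rw [eTerm_shift w (keys l) W a (by omega) ha, ulog, if_pos ha]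
        have : ((keys l).map w).sum = a := by rw [hadef, wt]
        rw [this, eSum]
      · have ha0 : a = 0 := by omega
        rw [eSum_zero_list w (keys l) W (by rw [← wt]; omega), ulog, if_neg ha]
        rw [eSum, eSum_zero_list w (keys l) (wt w l) (by rw [← wt]; omega)]
        ring
    have hRpart : ((keys r).map (eTerm w W)).sum = eSum w r + ulog b W := by
      by_cases hb : 0 < b
      · rw [eTerm_shift w (keys r) W b (by omega) hb, ulog, if_pos hb]
        have : ((keys r).map w).sum = b := by rw [hbdef, wt]
        rw [this, eSum]
      · have hb0 : b = 0 := by omega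
        rw [eSum_zero_list w (keys r) W (by rw [← wt]; omega), ulog, if_neg hb]
        rw [eSum, eSum_zero_list w (keys r) (wt w r) (by rw [← wt]; omega)]
        ring
    have hCpart : eTerm w W key = ulog c W - 4 * c := by
      by_cases hc : 0 < c
      · rw [eTerm, if_pos hc, ← hcdef]
        exact tC_eq c W hc (by omega)
      · have hc0 : c = 0 := by omega
        rw [eTerm, if_neg (by omega), ulog, if_neg hc, hc0]
        push_cast; ring
    have hlamb : (lamb w (BT.node l key r) : ℝ) =
        ((if l ≠ BT.leaf ∧ r ≠ BT.leaf then a + b - 1 else 0 : ℕ) : ℝ)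
          + (lamb w l : ℝ) + (lamb w r : ℝ) := by
      rw [lamb]; push_cast; ring
    rw [hsplit, hLpart, hRpart, hCpart, hlamb]
    have hmain : ulog a W + ulog b W + (ulog c W - 4 * c) ≤
        4 * ((if l ≠ BT.leaf ∧ r ≠ BT.leaf then a + b - 1 else 0 : ℕ) : ℝ) := by
      by_cases hBoth : l ≠ BT.leaf ∧ r ≠ BT.leaf
      · rw [if_pos hBoth]
        by_cases hab1 : a + b = 0
        · have ha0 : a = 0 := by omega
          have hb0 : b = 0 := by omega
          have hcW : c = W := by omega
          rw [ha0, hb0, hcW, ulog_self]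
          simp only [ulog, if_neg (lt_irrefl 0)]
          norm_num
        · have hcast : ((a + b - 1 : ℕ) : ℝ) = (a : ℝ) + b - 1 := by
            have : 1 ≤ a + b := by omega
            push_cast [Nat.cast_sub this]
            ring
          rw [hcast]
          by_cases hW1 : 2 ≤ W
          · have h3 := three_bound a b c W (by omega)
            have : (a : ℝ) + b + c = W := by exact_mod_cast congrArg (fun t : ℕ => (t : ℝ)) (by omega : a + b + c = W)
            have hWR : (2 : ℝ) ≤ W := by exact_mod_cast hW1
            nlinarith [h3]
          · -- W = 1, a + b = 1, c = 0
            have hW1' : W = 1 := by omega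
            have hc0 : c = 0 := by omega
            have hcases : (a = 1 ∧ b = 0) ∨ (a = 0 ∧ b = 1) := by omega
            rcases hcases with ⟨he1, he2⟩ | ⟨he1, he2⟩ <;>
              rw [he1, he2, hc0, hW1'] <;>
              simp only [ulog_self, ulog, if_neg (lt_irrefl 0)] <;>
              norm_num
      · rw [if_neg hBoth]
        have hor : a = 0 ∨ b = 0 := by
          rcases not_and_or.mp hBoth with h | h
          · left
            have : l = BT.leaf := not_not.mp h
            rw [hadef, this, wt, BT.keys]
            simp
          · right
            have : r = BT.leaf := not_not.mp h
            rw [hbdef, this, wt, BT.keys]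
            simp
        rcases hor with h0 | h0
        · -- a = 0 : W ≤ 2c
          have hc2 : W ≤ 2 * c := by omega
          have h2 := two_bound b c W (by omega)
          have hcR : (W : ℝ) ≤ 2 * c := by exact_mod_cast hc2
          rw [h0, show ulog 0 W = 0 from by simp [ulog]]
          have hc0R : (0:ℝ) ≤ (c:ℝ) := by positivity
          push_cast
          linarith [h2]
        · -- b = 0 : 2a ≤ W - 1, a + c = W so 4c ≥ W
          rcases hma with hma | hma
          swap
          · exact absurd hma hW0
          have hc4 : W ≤ 4 * c := by omega
          have h2 := two_bound a c W (by omega)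
          have hcR : (W : ℝ) ≤ 4 * c := by exact_mod_cast hc4
          rw [h0, show ulog 0 W = 0 from by simp [ulog]]
          have hc0R : (0:ℝ) ≤ (c:ℝ) := by positivity
          push_cast
          linarith [h2]
    linarith [ih1, ih2, hmain]

end ESum

section RootCases

variable {α : Type} [DecidableEq α]
open BT

lemma pgo_root_cases : ∀ (t : BT α) (p : Option α) (x : α), x ∈ keys t →
    (rootk t = some x ∧ pgo t p x = p) ∨ (∃ z ∈ keys t, pgo t p x = some z) := by
  intro t
  induction t with
  | leaf => simp [BT.keys]
  | node l k r ihl ihr =>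
    intro p x hx
    by_cases hxk : x = k
    · subst hxk
      exact Or.inl ⟨rfl, by rw [BT.pgo, if_pos rfl]⟩
    · rw [BT.keys] at hx
      simp only [List.mem_append, List.mem_cons] at hx
      by_cases hxl : x ∈ keys l
      · right
        rw [BT.pgo, if_neg hxk, if_pos hxl]
        rcases ihl (some k) x hxl with ⟨_, h2⟩ | ⟨z, hz, h2⟩
        · exact ⟨k, by rw [BT.keys]; simp, h2⟩
        · exact ⟨z, by rw [BT.keys]; simp [hz], h2⟩
      · have hxr : x ∈ keys r := by tauto
        right
        rw [BT.pgo, if_neg hxk, if_neg hxl]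
        rcases ihr (some k) x hxr with ⟨_, h2⟩ | ⟨z, hz, h2⟩
        · exact ⟨k, by rw [BT.keys]; simp, h2⟩
        · exact ⟨z, by rw [BT.keys]; simp [hz], h2⟩

end RootCases

section FinTree
open BT

def Twb (n : ℕ) (m : Fin n → ℕ) : BT (Fin n) := BT.build m (List.finRange n)

lemma Twb_keys (n : ℕ) (m : Fin n → ℕ) : BT.keys (Twb n m) = List.finRange n :=
  BT.keys_build m _

lemma Twb_nodup (n : ℕ) (m : Fin n → ℕ) : (BT.keys (Twb n m)).Nodup := by
  rw [Twb_keys]; exact List.nodup_finRange n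

def Swb (n : ℕ) (m : Fin n → ℕ) : RTree (Fin n) where
  supp := Finset.univ
  parent := BT.pgo (Twb n m) none
  parent_eq_none := fun v hv => absurd (Finset.mem_univ v) hv
  mem_of_parent := fun _ => ⟨Finset.mem_univ _, Finset.mem_univ _⟩
  root_unique := by
    intro v _ u _ hv hu
    have hmv : v ∈ BT.keys (Twb n m) := by rw [Twb_keys]; exact List.mem_finRange v
    have hmu : u ∈ BT.keys (Twb n m) := by rw [Twb_keys]; exact List.mem_finRange u
    rcases pgo_root_cases (Twb n m) none v hmv with ⟨h1, _⟩ | ⟨z, _, h2⟩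
    · rcases pgo_root_cases (Twb n m) none u hmu with ⟨h1', _⟩ | ⟨z, _, h2'⟩
      · have := h1.symm.trans h1'
        injection this
      · rw [hu] at h2'; simp at h2'
    · rw [hv] at h2; simp at h2
  reaches_root := by
    intro v _
    have hmv : v ∈ BT.keys (Twb n m) := by rw [Twb_keys]; exact List.mem_finRange v
    obtain ⟨l, k, r, hT⟩ : ∃ l k r, Twb n m = BT.node l k r := by
      cases hT : Twb n m with
      | leaf => rw [hT] at hmv; simp [BT.keys] at hmv
      | node l k r => exact ⟨l, k, r, rfl⟩
    refine ⟨k, Finset.mem_univ k, ?_, ?_⟩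
    · exact occ_parent_root (Twb_nodup n m)
        (show Occ (Twb n m) (BT.node l k r) none from by rw [← hT]; exact Occ.top)
    · exact rtg_root_of_mem (Twb_nodup n m) (Twb n m) none Occ.top v hmv k (by rw [hT]; rfl)

lemma swb_anc_iff (n : ℕ) (m : Fin n → ℕ) {t : BT (Fin n)} {p : Option (Fin n)}
    (ho : Occ (Twb n m) t p) {u : Fin n} (hu : rootk t = some u) (x : Fin n) :
    (Swb n m).Anc u x ↔ x ∈ BT.keys t :=
  anc_iff_mem (Twb_nodup n m) ho hu x

lemma wilber_node (n : ℕ) (m : Fin n → ℕ) {l r : BT (Fin n)} {k : Fin n} {p : Option (Fin n)}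
    (ho : Occ (Twb n m) (BT.node l k r) p)
    (hl : l ≠ BT.leaf) (hr : r ≠ BT.leaf)
    (hab : wt m l ≤ wt m r + m k) (hba : wt m r ≤ wt m l + m k) :
    wt m l + wt m r ≤ wilberLam (Swb n m) k (BT.nseq m (Twb n m)) + 1 := by
  classical
  obtain ⟨hndl, hndr, hkl, hkr, hdisj⟩ := nodup_node (Occ.nodup (Twb_nodup n m) ho)
  obtain ⟨l1, a1, r1, rfl⟩ : ∃ l1 a1 r1, l = BT.node l1 a1 r1 := by
    cases l with
    | leaf => exact absurd rfl hl
    | node l1 a1 r1 => exact ⟨l1, a1, r1, rfl⟩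
  obtain ⟨l2, a2, r2, rfl⟩ : ∃ l2 a2 r2, r = BT.node l2 a2 r2 := by
    cases r with
    | leaf => exact absurd rfl hr
    | node l2 a2 r2 => exact ⟨l2, a2, r2, rfl⟩
  set T := Twb n m
  set S := Swb n m
  set σ := BT.nseq m T with hσdef
  have hpar1 : S.parent a1 = some k := occ_parent_root (Twb_nodup n m) (Occ.left ho)
  have hpar2 : S.parent a2 = some k := occ_parent_root (Twb_nodup n m) (Occ.right ho)
  have ha1mem : a1 ∈ BT.keys (BT.node l1 a1 r1) := by rw [BT.keys]; simp
  have ha2mem : a2 ∈ BT.keys (BT.node l2 a2 r2) := by rw [BT.keys]; simp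
  have hne : a1 ≠ a2 := fun h => hdisj a1 ha1mem (h ▸ ha2mem)
  have hguard : ∃ v w : Fin n, v ≠ w ∧ S.parent v = some k ∧ S.parent w = some k :=
    ⟨a1, a2, hne, hpar1, hpar2⟩
  rw [wilberLam, if_pos hguard]
  have hfiltereq : σ.filter (fun x => decide (S.Anc k x)) =
      σ.filter (fun x => decide (x ∈ BT.keys (BT.node (BT.node l1 a1 r1) k (BT.node l2 a2 r2)))) := by
    apply List.filter_congr
    intro x _
    exact decide_eq_decide.mpr (swb_anc_iff n m ho rfl x)
  rw [hfiltereq, nseq_filter (Twb_nodup n m) m ho, BT.nseq]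
  set f : Fin n → ℕ := fun x =>
    if x ∈ BT.keys (BT.node l1 a1 r1) then 0 else if x ∈ BT.keys (BT.node l2 a2 r2) then 1 else 2
    with hfdef
  have halt := WilberProof.weave_alt f (BT.nseq m (BT.node l1 a1 r1))
    (BT.nseq m (BT.node l2 a2 r2)) (List.replicate (m k) k)
    (fun x hx => by simp only [hfdef]; rw [if_pos (mem_nseq m _ x hx)])
    (fun y hy => by
      have hyr := mem_nseq m _ y hy
      simp only [hfdef]
      rw [if_neg (fun hc => hdisj y hc hyr), if_pos hyr])
    (fun z hz => by
      rw [List.eq_of_mem_replicate hz]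
      simp only [hfdef]
      rw [if_neg hkl, if_neg hkr])
    (by rw [length_nseq, length_nseq, List.length_replicate]; omega)
    (by rw [length_nseq, length_nseq, List.length_replicate]; omega)
  rw [length_nseq, length_nseq] at halt
  refine le_trans halt ?_
  have hmono : pairAlt (fun u v => f u ≠ f v)
      (WilberProof.weave (BT.nseq m (BT.node l1 a1 r1)) (BT.nseq m (BT.node l2 a2 r2))
        (List.replicate (m k) k)) ≤
      pairAlt (fun x y => ¬((x = k ∧ y = k) ∨
        ∃ ch, S.parent ch = some k ∧ S.Anc ch x ∧ S.Anc ch y))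
      (WilberProof.weave (BT.nseq m (BT.node l1 a1 r1)) (BT.nseq m (BT.node l2 a2 r2))
        (List.replicate (m k) k)) := by
    apply pairAlt_mono
    intro x hx y hy hf
    have hxmem : x ∈ BT.keys (BT.node (BT.node l1 a1 r1) k (BT.node l2 a2 r2)) := by
      apply mem_nseq m
      rw [BT.nseq]; exact hx
    have hymem : y ∈ BT.keys (BT.node (BT.node l1 a1 r1) k (BT.node l2 a2 r2)) := by
      apply mem_nseq m
      rw [BT.nseq]; exact hy
    rintro (⟨rfl, rfl⟩ | ⟨ch, hch, hax, hay⟩)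
    · exact hf rfl
    · rcases pgo_some_cases T none ch k hch with ⟨_, habs⟩ | ⟨l', k', r', hsub, hkk, hroot⟩
      · simp at habs
      · subst hkk
        have heq : (BT.node l' k r' : BT (Fin n)) =
            BT.node (BT.node l1 a1 r1) k (BT.node l2 a2 r2) :=
          sub_root_unique T (Twb_nodup n m) _ _ hsub ho.sub k rfl rfl
        obtain ⟨rfl, rfl⟩ : l' = BT.node l1 a1 r1 ∧ r' = BT.node l2 a2 r2 := by
          injection heq with e1 e2 e3
          exact ⟨e1, e3⟩
        rcases hroot with hroot | hroot
        · have hch' : ch = a1 := by rw [BT.rootk] at hroot; injection hroot.symm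
          rw [hch'] at hax hay
          have hx' : x ∈ BT.keys (BT.node l1 a1 r1) :=
            (anc_iff_mem (Twb_nodup n m) (Occ.left ho) rfl x).mp hax
          have hy' : y ∈ BT.keys (BT.node l1 a1 r1) :=
            (anc_iff_mem (Twb_nodup n m) (Occ.left ho) rfl y).mp hay
          apply hf
          simp only [hfdef]
          rw [if_pos hx', if_pos hy']
        · have hch' : ch = a2 := by rw [BT.rootk] at hroot; injection hroot.symm
          rw [hch'] at hax hay
          have hx' : x ∈ BT.keys (BT.node l2 a2 r2) :=
            (anc_iff_mem (Twb_nodup n m) (Occ.right ho) rfl x).mp hax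
          have hy' : y ∈ BT.keys (BT.node l2 a2 r2) :=
            (anc_iff_mem (Twb_nodup n m) (Occ.right ho) rfl y).mp hay
          apply hf
          simp only [hfdef]
          rw [if_neg (fun hc => hdisj x hc hx'), if_pos hx',
            if_neg (fun hc => hdisj y hc hy'), if_pos hy']
  omega

lemma lamb_le_sum (n : ℕ) (m : Fin n → ℕ) : ∀ (L : List (Fin n)) (p : Option (Fin n)),
    Occ (Twb n m) (BT.build m L) p →
    BT.lamb m (BT.build m L) ≤
      ((BT.keys (BT.build m L)).map
        (fun u => wilberLam (Swb n m) u (BT.nseq m (Twb n m)))).sum := by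
  intro L
  induction L using BT.build.induct m with
  | case1 => intro p ho; simp [BT.build, BT.lamb, BT.keys]
  | case2 x xs ih1 ih2 =>
    intro p ho
    have hbuild : BT.build m (x :: xs) = BT.node
        (BT.build m ((x :: xs).take (medIdx m (((x :: xs).map m).sum) (x :: xs))))
        ((x :: xs).getD (medIdx m (((x :: xs).map m).sum) (x :: xs)) x)
        (BT.build m ((x :: xs).drop (medIdx m (((x :: xs).map m).sum) (x :: xs) + 1))) := by
      rw [BT.build]
    set W := (((x :: xs).map m).sum) with hWdef
    set j := medIdx m W (x :: xs) with hjdef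
    set l := BT.build m ((x :: xs).take j) with hldef
    set key := (x :: xs).getD j x with hkeydef
    set r := BT.build m ((x :: xs).drop (j + 1)) with hrdef
    set a := wt m l with hadef
    set b := wt m r with hbdef
    set c := m key with hcdef
    have hjlt : j < (x :: xs).length := medIdx_lt m (x :: xs) W (by simp) (by omega)
    have hkeysl : BT.keys l = (x :: xs).take j := keys_build m _
    have hkeysr : BT.keys r = (x :: xs).drop (j + 1) := keys_build m _
    have hkeyget : key = (x :: xs)[j] := List.getD_eq_getElem (x :: xs) x hjlt
    have hwtnode : wt m (BT.node l key r) = W := by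
      rw [show (BT.node l key r) = BT.build m (x :: xs) from hbuild.symm]
      rw [wt, keys_build]
    have habc : a + c + b = W := by rw [← hwtnode, wt_node]
    have hma : 2 * a ≤ W - 1 ∨ W = 0 := by
      by_cases hW1 : 1 ≤ W
      · left
        have := medIdx_take_lt m (x :: xs) W hW1
        rw [← hjdef] at this
        have ha' : a = (((x :: xs).take j).map m).sum := by rw [hadef, wt, hkeysl]
        omega
      · right; omega
    have hmac : W ≤ 2 * (a + c) := by
      have := medIdx_take_ge m (x :: xs) W (by simp) (by omega)
      rw [← hjdef] at this
      have htake : (x :: xs).take (j + 1) = (x :: xs).take j ++ [(x :: xs)[j]] := by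
        rw [← List.take_concat_get hjlt]
        simp
      rw [htake] at this
      simp only [List.map_append, List.sum_append, List.map_cons, List.sum_cons,
        List.map_nil, List.sum_nil] at this
      have ha' : a = (((x :: xs).take j).map m).sum := by rw [hadef, wt, hkeysl]
      rw [← hkeyget] at this
      omega
    rw [hbuild] at ho ⊢
    have hsum : ((BT.keys (BT.node l key r)).map
        (fun u => wilberLam (Swb n m) u (BT.nseq m (Twb n m)))).sum =
        ((BT.keys l).map (fun u => wilberLam (Swb n m) u (BT.nseq m (Twb n m)))).sum
        + wilberLam (Swb n m) key (BT.nseq m (Twb n m))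
        + ((BT.keys r).map (fun u => wilberLam (Swb n m) u (BT.nseq m (Twb n m)))).sum := by
      rw [BT.keys]
      simp [List.map_append, List.sum_append]
      ring
    rw [hsum]
    have hihl := ih1 (some key) (Occ.left ho)
    have hihr := ih2 (some key) (Occ.right ho)
    by_cases hBoth : l ≠ BT.leaf ∧ r ≠ BT.leaf
    · have hwn := wilber_node n m ho hBoth.1 hBoth.2 (by omega) (by omega)
      rw [BT.lamb, if_pos hBoth]
      omega
    · rw [BT.lamb, if_neg hBoth]
      omega

end FinTree

section STG
open BT

variable {α : Type} [DecidableEq α]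

lemma find_node {T : BT α} : ∀ (t : BT α) (p : Option α), Occ T t p →
    ∀ v ∈ BT.keys t, ∃ t' p', Occ T t' p' ∧ rootk t' = some v := by
  intro t
  induction t with
  | leaf => simp [BT.keys]
  | node l k r ihl ihr =>
    intro p ho v hv
    rw [BT.keys] at hv
    simp only [List.mem_append, List.mem_cons] at hv
    rcases hv with hv | hveq | hv
    · exact ihl (some k) (Occ.left ho) v hv
    · exact ⟨BT.node l k r, p, ho, by rw [BT.rootk, hveq]⟩
    · exact ihr (some k) (Occ.right ho) v hv

lemma swb_comparable (n : ℕ) (m : Fin n → ℕ) :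
    ∀ (t : BT (Fin n)) (p : Option (Fin n)), Occ (Twb n m) t p →
    ∀ u ∈ BT.keys t, ∀ v ∈ BT.keys t, (u.val + 1 = v.val ∨ v.val + 1 = u.val) →
    (Swb n m).Anc u v ∨ (Swb n m).Anc v u := by
  intro t
  induction t with
  | leaf => simp [BT.keys]
  | node l k r ihl ihr =>
    intro p ho u hu v hv hadj
    have hsorted : (BT.keys (BT.node l k r)).Pairwise (· < ·) := by
      have h1 : (List.finRange n).Pairwise (· < ·) := List.pairwise_lt_finRange n
      have h2 := ho.sub.keys_sublist
      rw [Twb_keys] at h2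
      exact h1.sublist h2
    rw [BT.keys] at hsorted
    have hcross : ∀ a ∈ BT.keys l, ∀ b' ∈ (k :: BT.keys r), a < b' :=
      (List.pairwise_append.mp hsorted).2.2
    have hkr : ∀ b' ∈ BT.keys r, k < b' :=
      (List.pairwise_cons.mp (List.pairwise_append.mp hsorted).2.1).1
    have hanc : ∀ x ∈ BT.keys (BT.node l k r), (Swb n m).Anc k x :=
      fun x hx => rtg_root_of_mem (Twb_nodup n m) _ p ho x hx k rfl
    rw [BT.keys] at hu hv
    simp only [List.mem_append, List.mem_cons] at hu hv
    rcases hu with hu | rfl | hu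
    · rcases hv with hv | rfl | hv
      · exact ihl (some k) (Occ.left ho) u hu v hv hadj
      · refine Or.inr (hanc u ?_)
        rw [BT.keys]; simp [hu]
      · exfalso
        have h1 : u.val < k.val := hcross u hu k (by simp)
        have h2 : k.val < v.val := hkr v hv
        omega
    · refine Or.inl (hanc v ?_)
      rw [BT.keys]; simp only [List.mem_append, List.mem_cons]; tauto
    · rcases hv with hv | rfl | hv
      · exfalso
        have h1 : v.val < k.val := hcross v hv k (by simp)
        have h2 : k.val < u.val := hkr u hu
        omega
      · refine Or.inr (hanc u ?_)
        rw [BT.keys]; simp [hu]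
      · exact ihr (some k) (Occ.right ho) u hu v hv hadj

lemma mem_of_infix_between {n : ℕ} {M : List (Fin n)} (hinf : M <:+: List.finRange n)
    {x z y : Fin n} (hx : x ∈ M) (hz : z ∈ M) (h1 : x ≤ y) (h2 : y ≤ z) : y ∈ M := by
  obtain ⟨s, u, hsu⟩ := hinf
  have hlen : s.length + M.length + u.length = n := by
    have := congrArg List.length hsu
    simp only [List.length_append, List.length_finRange] at this
    omega
  have hchar : ∀ a : Fin n, a ∈ M → s.length ≤ a.val ∧ a.val < s.length + M.length := by
    intro a ha
    obtain ⟨q, hq, hget⟩ := List.getElem_of_mem ha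
    have hq1 : s.length + q < (s ++ M).length := by simp; omega
    have e1 : (s ++ M ++ u)[s.length + q]'(by simp; omega) = a := by
      rw [List.getElem_append_left hq1]
      rw [List.getElem_append_right (by omega)]
      simpa using hget
    have e2 : (s ++ M ++ u)[s.length + q]'(by simp; omega) =
        (List.finRange n)[s.length + q]'(by simp only [List.length_finRange]; omega) :=
      List.getElem_of_eq hsu _
    have e3 : a.val = s.length + q := by
      rw [← e1, e2]
      simp [List.getElem_finRange]
    omega
  have hchar2 : ∀ a : Fin n, s.length ≤ a.val → a.val < s.length + M.length → a ∈ M := by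
    intro a ha1 ha2
    have hv : a.val < (List.finRange n).length := by simpa using a.isLt
    have e1 : (List.finRange n)[a.val]'hv = a := by
      apply Fin.ext
      simp [List.getElem_finRange]
    have e2 : (s ++ M ++ u)[a.val]'(by simp; omega) =
        (List.finRange n)[a.val]'hv := List.getElem_of_eq hsu _
    have e4 : (s ++ M ++ u)[a.val]'(by simp; omega) = a := e2.trans e1
    rw [List.getElem_append_left (by simp; omega : a.val < (s ++ M).length)] at e4
    rw [List.getElem_append_right ha1] at e4
    exact e4 ▸ List.getElem_mem _
  obtain ⟨e1, e2⟩ := hchar x hx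
  obtain ⟨e3, e4⟩ := hchar z hz
  exact hchar2 y (by have := h1; omega) (by have := h2; omega)

lemma interval_connected (n : ℕ) (A : Set (Fin n)) (hne : A.Nonempty)
    (hbet : ∀ x ∈ A, ∀ z ∈ A, ∀ y : Fin n, x ≤ y → y ≤ z → y ∈ A) :
    ((restrictG (SimpleGraph.pathGraph n) ↑(Finset.univ : Finset (Fin n))).induce A).Connected := by
  rw [SimpleGraph.connected_iff]
  constructor
  · have H : ∀ d : ℕ, ∀ (x y : Fin n) (hx : x ∈ A) (hy : y ∈ A), y.val = x.val + d →
        ((restrictG (SimpleGraph.pathGraph n) ↑(Finset.univ : Finset (Fin n))).induce A).Reachable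
          ⟨x, hx⟩ ⟨y, hy⟩ := by
      intro d
      induction d with
      | zero =>
        intro x y hx hy h
        have : x = y := Fin.ext (by omega)
        subst this
        rfl
      | succ d ih =>
        intro x y hx hy h
        have hmidlt : x.val + d < n := by have := y.isLt; omega
        set mid : Fin n := ⟨x.val + d, hmidlt⟩ with hmid
        have hmidA : mid ∈ A := by
          apply hbet x hx y hy mid
          · show x.val ≤ x.val + d; omega
          · show x.val + d ≤ y.val; omega
        refine (ih x mid hx hmidA rfl).trans ?_
        apply SimpleGraph.Adj.reachable
        show (restrictG (SimpleGraph.pathGraph n) ↑(Finset.univ : Finset (Fin n))).Adj mid y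
        refine ⟨?_, by simp, by simp⟩
        rw [SimpleGraph.pathGraph_adj]
        left
        simp [hmid]
        omega
    intro a b
    obtain ⟨x, hx⟩ := a
    obtain ⟨y, hy⟩ := b
    rcases le_total x y with hle | hle
    · exact H (y.val - x.val) x y hx hy (by have := hle; omega)
    · exact (H (x.val - y.val) y x hy hx (by have := hle; omega)).symm
  · obtain ⟨v, hv⟩ := hne
    exact ⟨⟨v, hv⟩⟩

end STG

section FinalAux
open BT

lemma finrange_map_sum {n : ℕ} (g : Fin n → ℕ) :
    ((List.finRange n).map g).sum = ∑ i, g i := by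
  rw [← List.ofFn_eq_map, List.sum_ofFn]

lemma finrange_map_sum_real {n : ℕ} (g : Fin n → ℝ) :
    ((List.finRange n).map g).sum = ∑ i, g i := by
  rw [← List.ofFn_eq_map, List.sum_ofFn]

lemma sum_count_eq_length {n : ℕ} (σ : List (Fin n)) :
    ∑ u : Fin n, σ.count u = σ.length := by
  induction σ with
  | nil => simp
  | cons a t ih =>
    simp only [List.count_cons, beq_iff_eq, List.length_cons]
    rw [Finset.sum_add_distrib, ih]
    simp

lemma final (n : ℕ) (hn : 1 ≤ n) (m : Fin n → ℕ) :
    ∃ (S : RTree (Fin n)) (σ : List (Fin n)),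
      IsSTG (SimpleGraph.pathGraph n) S ∧
      σ.length = ∑ i, m i ∧ (∀ i : Fin n, σ.count i = m i) ∧
      (1/4 : ℝ) * ((∑ i, m i : ℕ) : ℝ) * shannonH m ≤ (wilberL' S σ : ℝ) := by
  classical
  refine ⟨Swb n m, BT.nseq m (Twb n m), ⟨rfl, ?_, ?_⟩, ?_, ?_, ?_⟩
  · -- connectivity
    intro v _
    have hvmem : v ∈ BT.keys (Twb n m) := by rw [Twb_keys]; exact List.mem_finRange v
    obtain ⟨t', p', ho', hr'⟩ := find_node (Twb n m) none Occ.top v hvmem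
    have hdesc : (Swb n m).descSet v = {x | x ∈ BT.keys t'} := by
      ext x
      exact swb_anc_iff n m ho' hr' x
    rw [hdesc]
    apply interval_connected
    · exact ⟨v, rootk_mem hr'⟩
    · intro x hx z hz y hxy hyz
      have hinf : BT.keys t' <:+: List.finRange n := by
        have := ho'.sub.keys_infix
        rwa [Twb_keys] at this
      exact mem_of_infix_between hinf hx hz hxy hyz
  · -- comparability
    intro u v _ _ hadj
    rw [SimpleGraph.pathGraph_adj] at hadj
    exact swb_comparable n m (Twb n m) none Occ.top u
      (by rw [Twb_keys]; exact List.mem_finRange u) v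
      (by rw [Twb_keys]; exact List.mem_finRange v) hadj
  · -- length
    rw [length_nseq, wt, Twb_keys, finrange_map_sum]
  · -- counts
    intro i
    rw [count_nseq m (Twb n m) (Twb_nodup n m) i,
      if_pos (by rw [Twb_keys]; exact List.mem_finRange i)]
  · -- the inequality
    set M := ∑ i, m i with hM
    set S := Swb n m with hS
    set σ := BT.nseq m (Twb n m) with hσ
    have hlen : σ.length = M := by rw [hσ, length_nseq, wt, Twb_keys, finrange_map_sum]
    have hwt : wt m (Twb n m) = M := by rw [wt, Twb_keys, finrange_map_sum]
    have hΛn : wilberL' S σ = (∑ u : Fin n, wilberLam S u σ) + M := by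
      rw [wilberL']
      simp only [wilberLam']
      rw [Finset.sum_add_distrib, sum_count_eq_length, hlen]
    have hsum1 : BT.lamb m (Twb n m) ≤ ∑ u : Fin n, wilberLam S u σ := by
      have h := lamb_le_sum n m (List.finRange n) none Occ.top
      rw [keys_build, finrange_map_sum] at h
      exact h
    have hent : eSum m (Twb n m) ≤ 4 * (BT.lamb m (Twb n m) : ℝ) :=
      main_entropy m (List.finRange n)
    have hMRsum : ((M : ℕ) : ℝ) = ∑ j, (m j : ℝ) := by
      rw [hM]; push_cast; rfl
    by_cases hM0 : M = 0
    · have hmall : ∀ i, m i = 0 := by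
        intro i
        have := Finset.sum_eq_zero_iff.mp (hM ▸ hM0 : ∑ i, m i = 0)
        exact this i (Finset.mem_univ i)
      have hsh : shannonH m = 0 := by
        rw [shannonH]
        apply Finset.sum_eq_zero
        intro i _
        rw [if_neg (by rw [hmall i]; omega)]
      rw [hsh, hM0]
      simp
    · have hMpos : 0 < M := Nat.pos_of_ne_zero hM0
      have hMR : (0:ℝ) < (M:ℝ) := by exact_mod_cast hMpos
      have hterm : ∀ i : Fin n, eTerm m M i =
          (if 0 < m i then (m i : ℝ) * Real.logb 2 ((M:ℝ)/(m i)) else 0) - 4 * (m i) := by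
        intro i
        rw [eTerm]
        by_cases h : 0 < m i
        · rw [if_pos h, if_pos h]
          have hmiR : (0:ℝ) < (m i : ℝ) := by exact_mod_cast h
          have e1 : ((M:ℝ)/(16 * m i)) = ((M:ℝ)/(m i))/16 := by
            rw [mul_comm]
            exact (div_div _ _ _).symm
          rw [e1, Real.logb_div (by positivity) (by norm_num), logb_sixteen]
          ring
        · rw [if_neg h, if_neg h]
          have : m i = 0 := by omega
          rw [this]
          push_cast; ring
      have htop : eSum m (Twb n m) =
          (∑ i : Fin n, (if 0 < m i then (m i : ℝ) * Real.logb 2 ((M:ℝ)/(m i)) else 0))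
            - 4 * M := by
        rw [eSum, hwt, Twb_keys, finrange_map_sum_real]
        rw [Finset.sum_congr rfl (fun i _ => hterm i)]
        rw [Finset.sum_sub_distrib]
        congr 1
        rw [← Finset.mul_sum, hMRsum]
      have hsh : (1/4 : ℝ) * M * shannonH m =
          (1/4) * (∑ i : Fin n, (if 0 < m i then (m i : ℝ) * Real.logb 2 ((M:ℝ)/(m i)) else 0)) := by
        rw [shannonH, Finset.mul_sum, Finset.mul_sum]
        apply Finset.sum_congr rfl
        intro i _
        by_cases h : 0 < m i
        · rw [if_pos h, if_pos h, ← hMRsum]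
          field_simp
        · rw [if_neg h, if_neg h]
          ring
      have hkey : (1/4 : ℝ) * M * shannonH m = (1/4) * eSum m (Twb n m) + M := by
        rw [hsh, htop]
        ring
      rw [hkey]
      have hc1 : (BT.lamb m (Twb n m) : ℝ) ≤ (∑ u : Fin n, wilberLam S u σ : ℕ) := by
        exact_mod_cast hsum1
      have hc2 : (wilberL' S σ : ℝ) = ((∑ u : Fin n, wilberLam S u σ : ℕ) : ℝ) + M := by
        rw [hΛn]; push_cast; ring
      rw [hc2]
      linarith [hent, hc1]

end FinalAux


end WilberProof

/-- there are a BST `S` and a sequence `σ` with prescribed frequencies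
such that Wilber's first bound satisfies `Λ'(S,σ) ≥ (1/4)·m·H`. -/
theorem wilber_entropy_lower_bound (n : ℕ) (hn : 1 ≤ n) (m : Fin n → ℕ) :
    ∃ (S : RTree (Fin n)) (σ : List (Fin n)),
      IsSTG (SimpleGraph.pathGraph n) S ∧
      σ.length = ∑ i, m i ∧ (∀ i : Fin n, σ.count i = m i) ∧
      (1/4 : ℝ) * ((∑ i, m i : ℕ) : ℝ) * shannonH m ≤ (wilberL' S σ : ℝ) := by
  exact WilberProof.final n hn m
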